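/- arXiv:2605.24623 — 2 statements merged into one kernel-verified Lean document; each statement's English description precedes it below -/
import Mathlib

section
/- Let k ∈ ℕ with k ≥ 1, let 0 < ε < 1/k, and let f(x) = x + π/k + ε sin²(kx) on ℝ. For any x with 0 < x < π/k, the sequence (f^j(x) − jπ/k)_{j≥0} is strictly increasing and bounded above by π/k. -/
/-- for `f(x) = x + π/k + ε sin²(kx)` with `k ≥ 1` and `0 < ε < 1/k`,
for any `0 < x < π/k` the sequence `j ↦ f^[j] x − j π/k` is strictly increasing and
bounded above by `π/k`. -/
theorem iterates_strictMono_bounded (k : ℕ) (hk : 1 ≤ k) (ε : ℝ)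
    (hε0 : 0 < ε) (hε : ε < 1 / k)
    (f : ℝ → ℝ) (hf : ∀ x, f x = x + Real.pi / k + ε * (Real.sin (k * x)) ^ 2)
    (x : ℝ) (hx0 : 0 < x) (hx : x < Real.pi / k) :
    StrictMono (fun j : ℕ => f^[j] x - j * (Real.pi / k)) ∧
      ∀ j : ℕ, f^[j] x - j * (Real.pi / k) ≤ Real.pi / k := by
  have hk0 : (0:ℝ) < k := by exact_mod_cast hk
  have hπk : 0 < Real.pi / k := div_pos Real.pi_pos hk0
  -- step formula
  have step : ∀ j : ℕ, f^[j+1] x - (j+1 : ℕ) * (Real.pi / k)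
      = (f^[j] x - j * (Real.pi / k))
        + ε * Real.sin (k * (f^[j] x - j * (Real.pi / k))) ^ 2 := by
    intro j
    have hiter : f^[j+1] x = f (f^[j] x) := Function.iterate_succ_apply' f j x
    have harg : (k:ℝ) * f^[j] x = k * (f^[j] x - j * (Real.pi / k)) + j * Real.pi := by
      field_simp
      ring
    have hsin : Real.sin (k * f^[j] x) ^ 2
        = Real.sin (k * (f^[j] x - j * (Real.pi / k))) ^ 2 := by
      rw [harg, Real.sin_add_nat_mul_pi, mul_pow, ← pow_mul, mul_comm j 2, pow_mul,
        neg_one_sq, one_pow, one_mul]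
    rw [hiter, hf, hsin]
    push_cast
    ring
  -- invariant
  have key : ∀ j : ℕ, 0 < f^[j] x - j * (Real.pi / k)
      ∧ f^[j] x - j * (Real.pi / k) < Real.pi / k := by
    intro j
    induction j with
    | zero => simpa using ⟨hx0, hx⟩
    | succ j ih =>
      obtain ⟨h1, h2⟩ := ih
      set g := f^[j] x - j * (Real.pi / k) with hg
      have ht0 : 0 < k * g := mul_pos hk0 h1
      have htπ : k * g < Real.pi := by
        have h2' : g * k < Real.pi := (lt_div_iff₀ hk0).mp h2
        linarith [mul_comm g (k:ℝ)]
      have hs0 : 0 < Real.sin (k * g) := Real.sin_pos_of_pos_of_lt_pi ht0 htπ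
      have hs1 : Real.sin (k * g) < Real.pi - k * g := by
        have h := Real.sin_lt (x := Real.pi - k * g) (by linarith)
        rwa [Real.sin_pi_sub] at h
      have hsle : Real.sin (k * g) ≤ 1 := Real.sin_le_one _
      rw [step j, ← hg]
      have hpos : 0 < ε * Real.sin (k * g) ^ 2 := mul_pos hε0 (pow_pos hs0 2)
      constructor
      · linarith
      · have hεk : ε * k < 1 := (lt_div_iff₀ hk0).mp hε
        rw [lt_div_iff₀ hk0]
        nlinarith [mul_pos hε0 hs0, mul_pos hs0 hs0]
  constructor
  · apply strictMono_nat_of_lt_succ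
    intro j
    obtain ⟨h1, h2⟩ := key j
    set g := f^[j] x - j * (Real.pi / k) with hg
    have ht0 : 0 < k * g := mul_pos hk0 h1
    have htπ : k * g < Real.pi := by
      have : g * k < Real.pi := (lt_div_iff₀ hk0).mp h2
      linarith [mul_comm g (k:ℝ)]
    have hs0 : 0 < Real.sin (k * g) := Real.sin_pos_of_pos_of_lt_pi ht0 htπ
    have hpos : 0 < ε * Real.sin (k * g) ^ 2 := mul_pos hε0 (pow_pos hs0 2)
    show f^[j] x - j * (Real.pi / k) < f^[j+1] x - (j+1 : ℕ) * (Real.pi / k)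
    rw [step j, ← hg]
    linarith
  · intro j
    exact le_of_lt (key j).2
end

section
/- Let k ∈ ℕ with k ≥ 1 and 0 < ε < 1/k, and let f : 𝕊¹ → 𝕊¹ be the circle diffeomorphism induced by x ↦ x + π/k + ε sin²(kx). Then f has no nonconstant C¹ first integral, i.e. every C¹ function F : 𝕊¹ → ℝ with F ∘ f = F is constant. -/
/-- the circle diffeomorphism induced by `x ↦ x + π/k + ε sin²(kx)`
(`k ≥ 1`, `0 < ε < 1/k`) has no nonconstant C¹ first integral: every C¹ function
`F : ℝ → ℝ` that is `2π`-periodic (i.e. a function on `𝕊¹ = ℝ/2πℤ`) and satisfies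
`F ∘ f = F` is constant. -/
theorem no_nonconstant_first_integral (k : ℕ) (hk : 1 ≤ k) (ε : ℝ)
    (hε0 : 0 < ε) (hε : ε < 1 / k)
    (f : ℝ → ℝ) (hf : ∀ x, f x = x + Real.pi / k + ε * (Real.sin (k * x)) ^ 2)
    (F : ℝ → ℝ) (hF : ContDiff ℝ 1 F)
    (hper : ∀ x, F (x + 2 * Real.pi) = F x)
    (hint : ∀ x, F (f x) = F x) :
    ∀ x y, F x = F y := by
  have hk0 : (0:ℝ) < k := by exact_mod_cast Nat.lt_of_lt_of_le Nat.zero_lt_one hk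
  have hkne : (k:ℝ) ≠ 0 := ne_of_gt hk0
  set p : ℝ := Real.pi / k with hp
  have hp0 : 0 < p := div_pos Real.pi_pos hk0
  have hkp : (k:ℝ) * p = Real.pi := by rw [hp]; field_simp
  have hεk : ε * k < 1 := by
    rw [div_eq_mul_inv, one_mul] at hε
    calc ε * k < (k:ℝ)⁻¹ * k := by exact mul_lt_mul_of_pos_right hε hk0
    _ = 1 := inv_mul_cancel₀ hkne
  set g : ℝ → ℝ := fun x => x + ε * Real.sin (k * x) ^ 2 with hg
  have hfg : ∀ x, f x = g x + p := by
    intro x; rw [hf, hg]; simp only; ring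
  have hgcont : Continuous g := by
    apply Continuous.add continuous_id
    exact (continuous_const.mul (((Real.continuous_sin.comp
      (continuous_const.mul continuous_id)).pow 2)))
  -- sin (k * (m*p)) = 0 for integer m
  have hsinz : ∀ m : ℤ, Real.sin ((k:ℝ) * (m * p)) = 0 := by
    intro m
    have : (k:ℝ) * (m * p) = m * Real.pi := by rw [← hkp]; ring
    rw [this]
    exact Real.sin_int_mul_pi m
  -- characterization: sin (k*c) = 0 ↔ c is an integer multiple of p
  have hsinz' : ∀ c : ℝ, Real.sin ((k:ℝ) * c) = 0 → ∃ m : ℤ, c = m * p := by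
    intro c hc
    rcases Real.sin_eq_zero_iff.1 hc with ⟨m, hm⟩
    exact ⟨m, by rw [hp]; field_simp; linarith [hm]⟩
  -- g commutes with translation by p
  have hgp : ∀ y, g (y + p) = g y + p := by
    intro y
    have h1 : (k:ℝ) * (y + p) = k * y + (1:ℤ) * Real.pi := by rw [← hkp]; push_cast; ring
    rw [hg]; simp only
    rw [h1, Real.sin_add_int_mul_pi]
    ring_nf
  have hgnp : ∀ (n : ℕ) (y : ℝ), g (y + n * p) = g y + n * p := by
    intro n
    induction n with
    | zero => intro y; simp
    | succ n ih =>
      intro y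
      have : y + (n+1 : ℕ) * p = (y + p) + n * p := by push_cast; ring
      rw [this, ih, hgp]; push_cast; ring
  -- iterates of f in terms of iterates of g
  have hiter : ∀ (n : ℕ) (x : ℝ), f^[n] x = g^[n] x + n * p := by
    intro n
    induction n with
    | zero => intro x; simp
    | succ n ih =>
      intro x
      rw [Function.iterate_succ_apply', Function.iterate_succ_apply', ih, hfg, hgnp]
      push_cast; ring
  have hFiter : ∀ (n : ℕ) (x : ℝ), F (f^[n] x) = F x := by
    intro n
    induction n with
    | zero => intro x; simp
    | succ n ih =>
      intro x
      rw [Function.iterate_succ_apply', hint, ih]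
  have hFper : ∀ (n : ℕ) (y : ℝ), F (y + n * (2 * Real.pi)) = F y := by
    intro n
    induction n with
    | zero => intro y; simp
    | succ n ih =>
      intro y
      have : y + (n+1 : ℕ) * (2 * Real.pi) = (y + 2 * Real.pi) + n * (2 * Real.pi) := by
        push_cast; ring
      rw [this, ih, hper]
  -- key: F (g^[2kn] x) = F x
  have hFg : ∀ (n : ℕ) (x : ℝ), F (g^[2*k*n] x) = F x := by
    intro n x
    have h1 : f^[2*k*n] x = g^[2*k*n] x + n * (2 * Real.pi) := by
      rw [hiter]
      congr 1
      push_cast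
      rw [← hkp]; ring
    calc F (g^[2*k*n] x) = F (g^[2*k*n] x + n * (2 * Real.pi)) := (hFper n _).symm
    _ = F (f^[2*k*n] x) := by rw [h1]
    _ = F x := hFiter _ x
  -- F at integer multiples of p equals F 0
  have hFmp : ∀ m : ℤ, F (m * p) = F 0 := by
    have step : ∀ m : ℤ, F ((m + 1) * p) = F (m * p) := by
      intro m
      have : f (m * p) = (m + 1) * p := by
        rw [hfg, hg]; simp only
        rw [hsinz m]
        ring
      rw [← this, hint]
    intro m
    induction m using Int.induction_on with
    | zero => simp
    | succ n ih =>
      have h := step (n:ℤ)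
      push_cast at h ih ⊢
      rw [h, ih]
    | pred n ih =>
      have h := step (-(n:ℤ)-1)
      have e : ((-(n:ℤ)-1 : ℤ):ℝ) + 1 = ((-(n:ℤ) : ℤ):ℝ) := by push_cast; ring
      rw [e] at h
      push_cast at h ih ⊢
      exact h.symm.trans ih
  -- main interval lemma: on (j*p, (j+1)*p), y < g y < (j+1)*p
  have hkey : ∀ (j : ℤ) (y : ℝ), (j:ℝ) * p < y → y < (j+1 : ℝ) * p →
      y < g y ∧ g y < (j+1 : ℝ) * p := by
    intro j y hy1 hy2
    have hsne : Real.sin ((k:ℝ) * y) ≠ 0 := by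
      intro h
      rcases hsinz' y h with ⟨m, hm⟩
      rw [hm] at hy1 hy2
      have h1 : (j:ℝ) < m := by
        have := (mul_lt_mul_iff_of_pos_right hp0).1 hy1; exact_mod_cast this
      have h2 : (m:ℝ) < (j:ℝ) + 1 := by
        have := (mul_lt_mul_iff_of_pos_right hp0).1 hy2; exact_mod_cast this
      have h1' : j < m := by exact_mod_cast h1
      have h2' : m < j + 1 := by exact_mod_cast h2
      omega
    constructor
    · have hs2 : 0 < Real.sin ((k:ℝ) * y) ^ 2 := by
        rw [pow_two]; exact mul_self_pos.mpr hsne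
      have := mul_pos hε0 hs2
      rw [hg]; simp only; linarith
    · -- g y < (j+1)*p
      set d : ℝ := (j+1 : ℝ) * p - y with hd
      have hd0 : 0 < d := by rw [hd]; linarith
      have habs : |Real.sin ((k:ℝ) * y)| ≤ k * d := by
        have h1 : (k:ℝ) * y = -(k * d) + (j+1 : ℤ) * Real.pi := by
          rw [← hkp, hd]; push_cast; ring
        rw [h1, Real.sin_add_int_mul_pi]
        rw [abs_mul]
        have h2 : |((-1:ℝ)) ^ ((j+1 : ℤ))| = 1 := by
          rcases Int.even_or_odd (j+1) with he | ho
          · rw [he.neg_one_zpow]; norm_num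
          · rw [ho.neg_one_zpow]; norm_num
        rw [h2, one_mul, Real.sin_neg, abs_neg]
        calc |Real.sin ((k:ℝ) * d)| ≤ |(k:ℝ) * d| := Real.abs_sin_le_abs
        _ = k * d := abs_of_pos (mul_pos hk0 hd0)
      have hs1 : |Real.sin ((k:ℝ) * y)| ≤ 1 := Real.abs_sin_le_one _
      have hsq : Real.sin ((k:ℝ) * y) ^ 2 ≤ k * d := by
        calc Real.sin ((k:ℝ) * y) ^ 2 = |Real.sin ((k:ℝ) * y)| ^ 2 := (sq_abs _).symm
        _ = |Real.sin ((k:ℝ) * y)| * |Real.sin ((k:ℝ) * y)| := pow_two _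
        _ ≤ 1 * (k * d) := mul_le_mul hs1 habs (abs_nonneg _) zero_le_one
        _ = k * d := one_mul _
      have : ε * Real.sin ((k:ℝ) * y) ^ 2 < d := by
        calc ε * Real.sin ((k:ℝ) * y) ^ 2 ≤ ε * (k * d) :=
              mul_le_mul_of_nonneg_left hsq (le_of_lt hε0)
        _ = (ε * k) * d := by ring
        _ < 1 * d := mul_lt_mul_of_pos_right hεk hd0
        _ = d := one_mul d
      rw [hg]; simp only
      rw [hd] at this; linarith
  -- now: F x = F 0 for all x
  have hmain : ∀ x, F x = F 0 := by
    intro x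
    set j : ℤ := ⌊x / p⌋ with hj
    have hj1 : (j:ℝ) * p ≤ x := by
      rw [hj]
      have := Int.floor_le (x / p)
      calc ((⌊x/p⌋ : ℤ) : ℝ) * p ≤ (x / p) * p := mul_le_mul_of_nonneg_right this (le_of_lt hp0)
      _ = x := by field_simp
    have hj2 : x < (j+1 : ℝ) * p := by
      rw [hj]
      have := Int.lt_floor_add_one (x / p)
      have h2 : x / p * p < (((⌊x/p⌋ : ℤ) : ℝ) + 1) * p := mul_lt_mul_of_pos_right this hp0
      rwa [div_mul_cancel₀ _ (ne_of_gt hp0)] at h2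
    rcases eq_or_lt_of_le hj1 with heq | hlt
    · rw [← heq]; exact hFmp j
    -- strict case: build the orbit
    set u : ℕ → ℝ := fun n => g^[n] x with hu
    have hu0 : u 0 = x := rfl
    have husucc : ∀ n, u (n+1) = g (u n) := by
      intro n; rw [hu]; simp only; rw [Function.iterate_succ_apply']
    have hubounds : ∀ n, (j:ℝ) * p < u n ∧ u n < (j+1:ℝ) * p := by
      intro n
      induction n with
      | zero => exact ⟨hlt, hj2⟩
      | succ n ih =>
        rcases hkey j (u n) ih.1 ih.2 with ⟨h1, h2⟩
        rw [husucc]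
        exact ⟨lt_trans ih.1 h1, h2⟩
    have humono : Monotone u := by
      apply monotone_nat_of_le_succ
      intro n
      rcases hubounds n with ⟨h1, h2⟩
      rw [husucc]
      exact le_of_lt (hkey j (u n) h1 h2).1
    have hubdd : BddAbove (Set.range u) := by
      refine ⟨(j+1:ℝ) * p, ?_⟩
      rintro y ⟨n, rfl⟩
      exact le_of_lt (hubounds n).2
    set L : ℝ := ⨆ n, u n with hL
    have htend : Filter.Tendsto u Filter.atTop (nhds L) :=
      tendsto_atTop_ciSup humono hubdd
    have hLle : L ≤ (j+1:ℝ) * p := ciSup_le fun n => le_of_lt (hubounds n).2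
    have hLgt : (j:ℝ) * p < L := lt_of_lt_of_le (hubounds 0).1 (le_ciSup hubdd 0)
    -- g L = L
    have hgL : g L = L := by
      have h1 : Filter.Tendsto (fun n => u (n+1)) Filter.atTop (nhds L) :=
        htend.comp (Filter.tendsto_add_atTop_nat 1)
      have h2 : Filter.Tendsto (fun n => g (u n)) Filter.atTop (nhds (g L)) :=
        (hgcont.tendsto L).comp htend
      have h3 : (fun n => u (n+1)) = fun n => g (u n) := funext husucc
      rw [h3] at h1
      exact tendsto_nhds_unique h2 h1
    have hLeq : L = (j+1:ℝ) * p := by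
      have hsin : Real.sin ((k:ℝ) * L) = 0 := by
        have : ε * Real.sin ((k:ℝ) * L) ^ 2 = 0 := by
          have := hgL; rw [hg] at this; simp only at this; linarith
        have h4 := (mul_eq_zero.1 this).resolve_left (ne_of_gt hε0)
        exact pow_eq_zero_iff (by norm_num) |>.1 h4
      rcases hsinz' L hsin with ⟨m, hm⟩
      rw [hm] at hLgt hLle ⊢
      have h1 : j < m := by
        have := (mul_lt_mul_iff_of_pos_right hp0).1 hLgt; exact_mod_cast this
      have h2 : (m:ℝ) ≤ (j:ℝ) + 1 := by
        have := (mul_le_mul_iff_of_pos_right hp0).1 hLle; exact_mod_cast this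
      have h2' : m ≤ j + 1 := by exact_mod_cast h2
      have : m = j + 1 := by omega
      rw [this]; push_cast; ring
    -- F x = F L via the subsequence 2*k*n
    have hFx : F x = F L := by
      have hsubtend : Filter.Tendsto (fun n => u (2*k*n)) Filter.atTop (nhds L) := by
        apply htend.comp
        apply Filter.tendsto_atTop_atTop.2
        intro b
        exact ⟨b, fun n hn => le_trans hn (Nat.le_mul_of_pos_left n (by omega))⟩
      have hFtend : Filter.Tendsto (fun n => F (u (2*k*n))) Filter.atTop (nhds (F L)) :=
        (hF.continuous.tendsto L).comp hsubtend
      have hconst : (fun n => F (u (2*k*n))) = fun _ => F x := by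
        funext n; rw [hu]; exact hFg n x
      rw [hconst] at hFtend
      exact tendsto_nhds_unique tendsto_const_nhds hFtend
    rw [hFx, hLeq]
    have : ((j+1:ℤ):ℝ) * p = ((j:ℝ)+1) * p := by push_cast; ring
    rw [← this]
    exact hFmp (j+1)
  intro x y
  rw [hmain x, hmain y]
end
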